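/- Let T, D, D^L be real numbers with T > 0 and 0 < D^L ≤ T, let R be a finite set of nonnegative reals any two distinct elements of which differ by at least T, and let 0 ≤ t1 ≤ t2 be reals. Then |{x ∈ R : x + D ≤ t2 and x + D^L > t1}| ≤ max(0, ⌊(t2 − t1 − D)/T⌋ + 1) + 1. That is, among the jobs with real deadline at most t2, at most one job beyond the count max(0, ⌊(t2 − t1 − D)/T⌋ + 1) can have its tightened deadline after the switch instant t1 (the carry-over job). -/

import Mathlib

open scoped Classical

/-- Among the jobs of a sporadic task (release set `R`, minimum
separation `T`) with real deadline at most `t2`, at most one job beyond the count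
`max 0 (⌊(t2 - t1 - D)/T⌋ + 1)` can have its tightened deadline after the switch
instant `t1` (the carry-over job). -/
theorem carry_over_job_count (T D DL : ℝ) (hT : 0 < T) (hDL0 : 0 < DL) (hDLT : DL ≤ T)
    (R : Finset ℝ) (hnn : ∀ x ∈ R, 0 ≤ x)
    (hsep : ∀ x ∈ R, ∀ y ∈ R, x ≠ y → T ≤ |x - y|)
    (t1 t2 : ℝ) (ht1 : 0 ≤ t1) (ht12 : t1 ≤ t2) :
    ((R.filter (fun x => x + D ≤ t2 ∧ t1 < x + DL)).card : ℝ) ≤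
      max 0 ((⌊(t2 - t1 - D) / T⌋ : ℝ) + 1) + 1 := by
  set S := R.filter (fun x => x + D ≤ t2 ∧ t1 < x + DL) with hS
  by_cases hc : t2 - t1 - D < 0
  · -- at most one element
    have h1 : S.card ≤ 1 := by
      apply Finset.card_le_one.mpr
      intro x hx y hy
      simp only [hS, Finset.mem_filter] at hx hy
      by_contra hne
      have hsepxy := hsep x hx.1 y hy.1 hne
      have habs : |x - y| < T := by
        rw [abs_sub_lt_iff]
        constructor <;> nlinarith [hx.2.1, hx.2.2, hy.2.1, hy.2.2]
      linarith
    have h1' : (S.card : ℝ) ≤ 1 := by exact_mod_cast h1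
    have hmax : (0:ℝ) ≤ max 0 ((⌊(t2 - t1 - D) / T⌋ : ℝ) + 1) := le_max_left _ _
    linarith
  · push_neg at hc
    set a := t1 - DL with ha
    set M := ⌊(t2 - D - a)/T⌋ with hM
    have hM0 : 0 ≤ M := by
      apply Int.floor_nonneg.mpr
      apply div_nonneg _ hT.le
      simp only [ha]; linarith
    have hcard : S.card ≤ (Finset.Icc (0:ℤ) M).card := by
      apply Finset.card_le_card_of_injOn (fun x => ⌊(x - a)/T⌋)
      · intro x hx
        simp only [Finset.mem_coe, hS, Finset.mem_filter] at hx
        rw [Finset.mem_coe, Finset.mem_Icc]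
        refine ⟨Int.floor_nonneg.mpr (div_nonneg ?_ hT.le), Int.floor_le_floor ?_⟩
        · simp only [ha]; linarith [hx.2.2]
        · have hx1 : x ≤ t2 - D - a + a := by linarith [hx.2.1]
          gcongr
          linarith
      · intro x hx y hy hxy
        simp only [Finset.mem_coe, hS, Finset.mem_filter] at hx hy
        by_contra hne
        have hsepxy := hsep x hx.1 y hy.1 hne
        have h1 : (x - a)/T < (↑⌊(x - a)/T⌋ : ℝ) + 1 := Int.lt_floor_add_one _
        have h2 : (↑⌊(y - a)/T⌋ : ℝ) ≤ (y - a)/T := Int.floor_le _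
        have h3 : (y - a)/T < (↑⌊(y - a)/T⌋ : ℝ) + 1 := Int.lt_floor_add_one _
        have h4 : (↑⌊(x - a)/T⌋ : ℝ) ≤ (x - a)/T := Int.floor_le _
        have heq : (↑⌊(x - a)/T⌋ : ℝ) = (↑⌊(y - a)/T⌋ : ℝ) := by
          exact_mod_cast congrArg (Int.cast : ℤ → ℝ) hxy
        have key1 : (x - a)/T - (y - a)/T = (x - y)/T := by ring
        have key2 : (y - a)/T - (x - a)/T = (y - x)/T := by ring
        have hlt : |x - y| < T := by
          rw [abs_sub_lt_iff]
          constructor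
          · have hd : (x - y)/T < 1 := by rw [← key1]; linarith
            have := (div_lt_one hT).mp hd
            linarith
          · have hd : (y - x)/T < 1 := by rw [← key2]; linarith
            have := (div_lt_one hT).mp hd
            linarith
        linarith
    have hIcc : (Finset.Icc (0:ℤ) M).card = M.toNat + 1 := by
      rw [Int.card_Icc]
      omega
    have hcardR : (S.card : ℝ) ≤ (M : ℝ) + 1 := by
      have : (S.card : ℝ) ≤ ((M.toNat : ℤ) : ℝ) + 1 := by
        exact_mod_cast hIcc ▸ hcard
      rwa [Int.toNat_of_nonneg hM0] at this
    have hMle : M ≤ ⌊(t2 - t1 - D)/T⌋ + 1 := by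
      have hle : (t2 - D - a)/T ≤ (t2 - t1 - D)/T + 1 := by
        have h' : (t2 - D - a)/T - (t2 - t1 - D)/T = DL/T := by
          simp only [ha]; ring
        have h'' : DL/T ≤ 1 := by
          rw [div_le_one hT]; exact hDLT
        linarith
      calc M ≤ ⌊(t2 - t1 - D)/T + 1⌋ := Int.floor_le_floor hle
        _ = ⌊(t2 - t1 - D)/T⌋ + 1 := by rw [Int.floor_add_one]
    have hfl0 : (0:ℤ) ≤ ⌊(t2 - t1 - D)/T⌋ := Int.floor_nonneg.mpr (div_nonneg hc hT.le)
    have hmax : max 0 ((⌊(t2 - t1 - D) / T⌋ : ℝ) + 1) = (⌊(t2 - t1 - D) / T⌋ : ℝ) + 1 := by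
      apply max_eq_right
      have : (0:ℝ) ≤ (⌊(t2 - t1 - D)/T⌋ : ℝ) := by exact_mod_cast hfl0
      linarith
    rw [hmax]
    have : (M : ℝ) ≤ (⌊(t2 - t1 - D)/T⌋ : ℝ) + 1 := by exact_mod_cast hMle
    linarith
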